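/- For all real symmetric n×n matrices X and Z: X = Π(X − Z) holds if and only if X is positive semidefinite, Z is positive semidefinite, and trace(X·Z) = 0. (This is the reformulation of the SDP complementarity conditions X ∈ S₊ⁿ, Z ∈ S₊ⁿ, ⟨X,Z⟩ = 0 as the single nonsmooth equation X − Π(X − Z) = 0.) -/

import Mathlib

open Matrix

variable {n : ℕ}

lemma cfc_posSemidef {W : Matrix (Fin n) (Fin n) ℝ} (hW : W.IsHermitian) {f : ℝ → ℝ}
    (hf : ∀ t, 0 ≤ f t) : (hW.cfc f).PosSemidef := by
  rw [Matrix.IsHermitian.cfc, Unitary.conjStarAlgAut_apply, Matrix.star_eq_conjTranspose]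
  exact (Matrix.PosSemidef.diagonal (fun i => by simpa using hf _)).mul_mul_conjTranspose_same _

open scoped MatrixOrder in
noncomputable def Matrix.PosSemidef.sqrt {A : Matrix (Fin n) (Fin n) ℝ} (_ : A.PosSemidef) :
    Matrix (Fin n) (Fin n) ℝ := CFC.sqrt A

open scoped MatrixOrder in
lemma Matrix.PosSemidef.posSemidef_sqrt {A : Matrix (Fin n) (Fin n) ℝ} (hA : A.PosSemidef) :
    hA.sqrt.PosSemidef := (CFC.sqrt_nonneg A).posSemidef

open scoped MatrixOrder in
lemma Matrix.PosSemidef.sqrt_mul_self {A : Matrix (Fin n) (Fin n) ℝ} (hA : A.PosSemidef) :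
    hA.sqrt * hA.sqrt = A := CFC.sqrt_mul_sqrt_self A hA.nonneg

open scoped MatrixOrder in
lemma Matrix.PosSemidef.eq_of_sq_eq_sq {A B : Matrix (Fin n) (Fin n) ℝ} (hA : A.PosSemidef)
    (hB : B.PosSemidef) (h : A ^ 2 = B ^ 2) : A = B :=
  (CFC.sq_eq_sq_iff A B hA.nonneg hB.nonneg).mp h

lemma trace_eq_zero_imp {X Z : Matrix (Fin n) (Fin n) ℝ} (hX : X.PosSemidef) (hZ : Z.PosSemidef)
    (h : (X * Z).trace = 0) : X * Z = 0 := by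
  have hMM : (hX.sqrt * hZ.sqrt)ᴴ * (hX.sqrt * hZ.sqrt) = hZ.sqrt * (X * hZ.sqrt) := by
    simp only [conjTranspose_mul, hX.posSemidef_sqrt.1.eq, hZ.posSemidef_sqrt.1.eq]
    simp only [← hX.sqrt_mul_self]
    noncomm_ring
  have htr : ((hX.sqrt * hZ.sqrt)ᴴ * (hX.sqrt * hZ.sqrt)).trace = 0 := by
    rw [hMM, trace_mul_comm, mul_assoc, hZ.sqrt_mul_self, h]
  set M := hX.sqrt * hZ.sqrt with hM
  have key : (Mᴴ * M).trace = ∑ j, ∑ i, (M i j)^2 := by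
    simp [Matrix.trace, Matrix.mul_apply, Matrix.diag, conjTranspose_apply, sq]
  have h1 := (Finset.sum_eq_zero_iff_of_nonneg
    (fun j _ => Finset.sum_nonneg fun i _ => sq_nonneg (M i j))).mp (key ▸ htr)
  have hM0 : M = 0 := by
    ext i j
    have h2 := (Finset.sum_eq_zero_iff_of_nonneg
      (fun i _ => sq_nonneg (M i j))).mp (h1 j (Finset.mem_univ j)) i (Finset.mem_univ i)
    simpa using sq_eq_zero_iff.mp h2
  calc X * Z = hX.sqrt * M * hZ.sqrt := by
        rw [hM]; simp only [← hX.sqrt_mul_self, ← hZ.sqrt_mul_self]; noncomm_ring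
    _ = 0 := by rw [hM0, mul_zero, zero_mul]

/-- The projection onto the PSD cone, `Π(W) = (t ↦ max(t,0))[W]`, via the primary matrix
function (Mathlib's `Matrix.IsHermitian.cfc`). -/
noncomputable def PiPSD {n : ℕ} {W : Matrix (Fin n) (Fin n) ℝ}
    (hW : W.IsHermitian) : Matrix (Fin n) (Fin n) ℝ :=
  hW.cfc (fun t => max t 0)

/-- For symmetric `X`, `Z`: `X = Π(X − Z)` iff `X ⪰ 0`, `Z ⪰ 0` and `⟨X,Z⟩ = trace(XZ) = 0`:
the SDP complementarity conditions as a single nonsmooth equation. -/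
theorem proj_complementarity {n : ℕ} (hn : 0 < n)
    (X Z : Matrix (Fin n) (Fin n) ℝ) (hX : X.IsHermitian) (hZ : Z.IsHermitian) :
    X = PiPSD (hX.sub hZ) ↔
      X.PosSemidef ∧ Z.PosSemidef ∧ (X * Z).trace = 0 := by
  set W : Matrix (Fin n) (Fin n) ℝ := X - Z with hWdef
  have hW : W.IsHermitian := hX.sub hZ
  have hWsa : IsSelfAdjoint W := hW
  set f : ℝ → ℝ := fun t => max t 0 with hfdef
  set g : ℝ → ℝ := fun t => max t 0 - t with hgdef
  have hfc : ContinuousOn f (spectrum ℝ W) :=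
    (continuous_id.max continuous_const).continuousOn
  have hgc : ContinuousOn g (spectrum ℝ W) :=
    ((continuous_id.max continuous_const).sub continuous_id).continuousOn
  set P : Matrix (Fin n) (Fin n) ℝ := cfc f W with hPdef'
  set Q : Matrix (Fin n) (Fin n) ℝ := cfc g W with hQdef'
  have hPdef : PiPSD (hX.sub hZ) = P := by
    rw [PiPSD, ← Matrix.IsHermitian.cfc_eq]
  have hP : P.PosSemidef := by
    rw [hPdef', Matrix.IsHermitian.cfc_eq hW]
    exact cfc_posSemidef hW (fun t => le_max_right t 0)
  have hQ : Q.PosSemidef := by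
    rw [hQdef', Matrix.IsHermitian.cfc_eq hW]
    exact cfc_posSemidef hW (fun t => sub_nonneg.mpr (le_max_left t 0))
  have hPQ : P - Q = W := by
    rw [hPdef', hQdef', ← cfc_sub f g W hfc hgc]
    calc cfc (fun x => f x - g x) W = cfc (id : ℝ → ℝ) W :=
          cfc_congr (fun x _ => by simp [hfdef, hgdef])
      _ = W := cfc_id ℝ W hWsa
  have hPQ0 : P * Q = 0 := by
    rw [hPdef', hQdef', ← cfc_mul f g W hfc hgc]
    calc cfc (fun x => f x * g x) W = cfc (0 : ℝ → ℝ) W := by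
          refine cfc_congr (fun x _ => ?_)
          rcases le_total x 0 with h | h <;>
            simp [hfdef, hgdef, max_eq_right, max_eq_left, h, mul_comm]
      _ = 0 := cfc_zero ℝ W
  have hQP : Q * P = 0 := by
    have h := congrArg conjTranspose hPQ0
    rw [conjTranspose_mul, hP.1.eq, hQ.1.eq, conjTranspose_zero] at h
    exact h
  constructor
  · intro h
    rw [hPdef] at h
    have hZQ : Z = Q := by
      have h1 : P - Q = P - Z := by rw [hPQ, hWdef, h]
      exact (sub_right_inj.mp h1).symm
    refine ⟨h ▸ hP, hZQ ▸ hQ, ?_⟩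
    rw [h, hZQ, hPQ0, trace_zero]
  · rintro ⟨hXp, hZp, htr⟩
    have hXZ : X * Z = 0 := trace_eq_zero_imp hXp hZp htr
    have hZX : Z * X = 0 := by
      have h := congrArg conjTranspose hXZ
      rw [conjTranspose_mul, hX.eq, hZ.eq, conjTranspose_zero] at h
      exact h
    have hsq : (X + Z) ^ 2 = (P + Q) ^ 2 := by
      have e1 : (X + Z) ^ 2 = W * W := by
        rw [hWdef, sq]
        simp only [mul_add, add_mul, mul_sub, sub_mul, hXZ, hZX]
        abel
      have e2 : (P + Q) ^ 2 = W * W := by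
        rw [← hPQ, sq]
        simp only [mul_add, add_mul, mul_sub, sub_mul, hPQ0, hQP]
        abel
      rw [e1, e2]
    have hsum : X + Z = P + Q := (hXp.add hZp).eq_of_sq_eq_sq (hP.add hQ) hsq
    have h' : X + X = P + P := by
      calc X + X = (X + Z) + (X - Z) := by abel
        _ = (P + Q) + (P - Q) := by rw [hsum, hWdef] at *; rw [hPQ]
        _ = P + P := by abel
    have h2 : (2 : ℝ) • X = (2 : ℝ) • P := by rw [two_smul, two_smul]; exact h'
    rw [hPdef]
    exact smul_right_injective _ (two_ne_zero) h2
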